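/- Let M be a set with d : [M]² → ℝ₊. If M is uncountable, bounded, and almost dichotomous with k⁺(M) = σ(M) = s > 0, then for every ε > 0 the set M contains an uncountable subset N which is ε-approximately s-equilateral. -/
import Mathlib


/-- `M` admits an uncountable `(r+)`-separated subset (w.r.t. the distance `d`). -/
def USep {M : Type*} (d : M → M → ℝ) (r : ℝ) : Prop :=
  ∃ N : Set M, ¬N.Countable ∧ ∀ x ∈ N, ∀ y ∈ N, x ≠ y → r < d x y

/-- `M` is the union of countably many sets each of diameter at most `r`
(w.r.t. the distance `d`). -/
def CCover {M : Type*} (d : M → M → ℝ) (r : ℝ) : Prop :=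
  ∃ f : ℕ → Set M, (⋃ n, f n) = Set.univ ∧
    ∀ n, ∀ x ∈ f n, ∀ y ∈ f n, x ≠ y → d x y ≤ r

/-- The diameter of `M` w.r.t `d` : the supremum of the distances between
distinct points. -/
noncomputable def diamd {M : Type*} (d : M → M → ℝ) : ℝ :=
  sSup {t : ℝ | ∃ x y : M, x ≠ y ∧ d x y = t}

/- STATEMENT 6: Let `M` be a set with `d : [M]² → ℝ₊` (encoded as a symmetric function
positive off the diagonal).  If `M` is uncountable, bounded and almost dichotomous with
`k⁺(M) = σ(M) = s > 0`, then for every `ε > 0` the set `M` contains an uncountable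
`ε`-approximately `s`-equilateral subset. -/
theorem stmt6 {M : Type*} (d : M → M → ℝ)
    (hsymm : ∀ x y : M, d x y = d y x)
    (hpos : ∀ x y : M, x ≠ y → 0 < d x y)
    (huncount : ¬(Set.univ : Set M).Countable)
    (hbdd : ∃ C : ℝ, ∀ x y : M, x ≠ y → d x y ≤ C)
    (halmost : ∃ r₀ : ℝ, ∀ r : ℝ, 0 < r → r ≤ diamd d → r ≠ r₀ → USep d r ∨ CCover d r)
    (s : ℝ) (hs : 0 < s)
    (hk : sSup {r : ℝ | 0 ≤ r ∧ USep d r} = s)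
    (hσ : sInf {r : ℝ | 0 ≤ r ∧ CCover d r} = s) :
    ∀ ε > (0 : ℝ), ∃ N : Set M, ¬N.Countable ∧
      ∀ x ∈ N, ∀ y ∈ N, x ≠ y → s - ε < d x y ∧ d x y < s + ε := by
  intro ε hε
  -- the set of separated radii is nonempty (contains 0)
  have hne : {r : ℝ | 0 ≤ r ∧ USep d r}.Nonempty :=
    ⟨0, le_refl 0, Set.univ, huncount, fun x _ y _ hxy => hpos x y hxy⟩
  set r₁ := max 0 (s - ε) with hr₁def
  have hr₁lt : r₁ < s := max_lt hs (by linarith)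
  have hr₁lt' : r₁ < sSup {r : ℝ | 0 ≤ r ∧ USep d r} := by rw [hk]; exact hr₁lt
  obtain ⟨a, ⟨ha0, A, hAc, hA⟩, hra⟩ := exists_lt_of_lt_csSup hne hr₁lt'
  -- the set of cover radii is nonempty
  have hσne : {r : ℝ | 0 ≤ r ∧ CCover d r}.Nonempty := by
    by_contra h
    rw [Set.not_nonempty_iff_eq_empty] at h
    rw [h, Real.sInf_empty] at hσ
    linarith
  have hlt : sInf {r : ℝ | 0 ≤ r ∧ CCover d r} < s + ε / 2 := by rw [hσ]; linarith
  obtain ⟨b, ⟨hb0, f, hfU, hf⟩, hbr⟩ := exists_lt_of_csInf_lt hσne hlt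
  -- some piece of the cover meets A uncountably
  have hpiece : ¬ ∀ n, (A ∩ f n).Countable := by
    intro h
    apply hAc
    have hAeq : A = ⋃ n, A ∩ f n := by
      rw [← Set.inter_iUnion, hfU, Set.inter_univ]
    rw [hAeq]
    exact Set.countable_iUnion h
  push_neg at hpiece
  obtain ⟨n, hn⟩ := hpiece
  refine ⟨A ∩ f n, hn, ?_⟩
  rintro x ⟨hxA, hxf⟩ y ⟨hyA, hyf⟩ hxy
  have h1 : s - ε ≤ r₁ := le_max_right _ _
  have h2 := hA x hxA y hyA hxy
  have h3 := hf n x hxf y hyf hxy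
  exact ⟨by linarith, by linarith⟩
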